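/- Let B be a commutative ring in which 2 is invertible, and for a 2×2 matrix b over B let jor(b) denote the determinant of the B-linear map on 2×2 matrices z ↦ (zb+bz)/2 (Jordan multiplication by b). Then jor(b) = (1/4)·(tr b)^2·det(b). -/

import Mathlib

lemma stdBasis_repr' {B : Type} [CommRing B] (M : Matrix (Fin 2) (Fin 2) B) (p : Fin 2 × Fin 2) :
    (Matrix.stdBasis B (Fin 2) (Fin 2)).repr M p = M p.1 p.2 := by
  have h : ∀ i j : Fin 2, Matrix.single i j (M i j)
      = M i j • Matrix.stdBasis B (Fin 2) (Fin 2) (i, j) := by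
    intro i j
    rw [Matrix.stdBasis_eq_single, Matrix.smul_single, smul_eq_mul, mul_one]
  nth_rewrite 1 [Matrix.matrix_eq_sum_single M]
  simp only [h, map_sum, map_smul, Module.Basis.repr_self]
  obtain ⟨i, j⟩ := p
  simp [Finsupp.single_apply, Prod.ext_iff, Fin.sum_univ_two]
  fin_cases i <;> fin_cases j <;> simp

set_option maxHeartbeats 1000000 in
lemma key_toMatrix {B : Type} [CommRing B] (h : B) (b : Matrix (Fin 2) (Fin 2) B) :
    LinearMap.toMatrix
      ((Matrix.stdBasis B (Fin 2) (Fin 2)).reindex (finProdFinEquiv (m := 2) (n := 2)))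
      ((Matrix.stdBasis B (Fin 2) (Fin 2)).reindex (finProdFinEquiv (m := 2) (n := 2)))
      (h • (LinearMap.mulLeft B b + LinearMap.mulRight B b)) =
      !![2*h*(b 0 0), h*(b 1 0), h*(b 0 1), 0;
         h*(b 0 1), h*(b 1 1 + b 0 0), 0, h*(b 0 1);
         h*(b 1 0), 0, h*(b 0 0 + b 1 1), h*(b 1 0);
         0, h*(b 1 0), h*(b 0 1), 2*h*(b 1 1)] := by
  have e0 : (finProdFinEquiv (m := 2) (n := 2)).symm 0 = (0, 0) := by decide
  have e1 : (finProdFinEquiv (m := 2) (n := 2)).symm 1 = (0, 1) := by decide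
  have e2 : (finProdFinEquiv (m := 2) (n := 2)).symm 2 = (1, 0) := by decide
  have e3 : (finProdFinEquiv (m := 2) (n := 2)).symm 3 = (1, 1) := by decide
  have sb : ∀ (p : Fin 2 × Fin 2) (i j : Fin 2),
      (Matrix.stdBasis B (Fin 2) (Fin 2)) p i j = if p.1 = i ∧ p.2 = j then 1 else 0 := by
    rintro ⟨k, l⟩ i j
    rw [Matrix.stdBasis_eq_single]
    rfl
  ext i j
  fin_cases i <;> fin_cases j <;>
    simp [e0, e1, e2, e3, sb, LinearMap.toMatrix_apply, Module.Basis.repr_reindex_apply,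
      Module.Basis.reindex_apply, -Module.Basis.repr_reindex,
      stdBasis_repr', Matrix.stdBasis_eq_single,
      Matrix.mul_apply, Fin.sum_univ_two, Matrix.single] <;> ring

/-- `jor half b` : the determinant of the linear map `z ↦ half • (z*b + b*z)`
(Jordan multiplication by `b`, when `half` is the inverse of `2`). -/
noncomputable def jor {n : ℕ} {B : Type} [CommRing B] (half : B)
    (b : Matrix (Fin n) (Fin n) B) : B :=
  LinearMap.det (half • (LinearMap.mulLeft B b + LinearMap.mulRight B b))

set_option maxHeartbeats 1000000 in
/-- For a `2 × 2` matrix `b` over a commutative ring in which `2` is invertible,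
the determinant of Jordan multiplication by `b` equals `(1/4)·(tr b)^2·det b`. -/
theorem stmt0 (B : Type) [CommRing B] [Invertible (2 : B)]
    (b : Matrix (Fin 2) (Fin 2) B) :
    jor (⅟(2 : B)) b = ⅟(2 : B) * ⅟(2 : B) * (Matrix.trace b) ^ 2 * b.det := by
  rw [jor, ← LinearMap.det_toMatrix
    ((Matrix.stdBasis B (Fin 2) (Fin 2)).reindex (finProdFinEquiv (m := 2) (n := 2))),
    key_toMatrix, Matrix.det_succ_row_zero]
  simp [Fin.sum_univ_succ, Matrix.det_fin_three, Matrix.submatrix_apply,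
    Matrix.trace_fin_two, Matrix.det_fin_two, Fin.succAbove]
  linear_combination ((⅟(2:B)^2*(1+2*⅟(2:B))*(b 0 0 + b 1 1)^2*(b 0 0*(b 1 1) - b 0 1*(b 1 0))) +
    (b 0 0 + b 1 1)^2*(2*⅟(2:B)^3*(b 0 1*(b 1 0)) - ⅟(2:B)^2*(2*⅟(2:B)+1)*(b 0 0*(b 1 1)))) *
    (mul_invOf_self (2:B))
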